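/- Let M be a real 2×2 matrix with determinant 1 and second row (m₁,m₂), let S = ((a,b),(c,d)) ∈ SL(2,ℝ), and let m₁' = m₁a + m₂c be the first entry of the second row of MS. Assume m₁·c·m₁' ≠ 0 and that m₁·m₁' > 0 or m₁·c < 0. Then w(M,S) = 0. -/

import Mathlib

noncomputable section
open Complex

/-- j(M,z) = cz + d for a real 2×2 matrix M = ((a,b),(c,d)). -/
def j2 (M : Matrix (Fin 2) (Fin 2) ℝ) (z : ℂ) : ℂ := (M 1 0 : ℝ) * z + (M 1 1 : ℝ)

/-- The Möbius action M⟨z⟩ = (az+b)/(cz+d). -/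
def act2 (M : Matrix (Fin 2) (Fin 2) ℝ) (z : ℂ) : ℂ :=
  ((M 0 0 : ℝ) * z + (M 0 1 : ℝ)) / ((M 1 0 : ℝ) * z + (M 1 1 : ℝ))

/-- The degree-one cocycle
w(M,N) = (1/2π)(Arg j(MN,i) - Arg j(M,N⟨i⟩) - Arg j(N,i)),
where Arg is the principal argument with values in (-π,π]. -/
def w2 (M N : Matrix (Fin 2) (Fin 2) ℝ) : ℝ :=
  ((j2 (M * N) Complex.I).arg - (j2 M (act2 N Complex.I)).arg
    - (j2 N Complex.I).arg) / (2 * Real.pi)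

lemma arg_pos_of_im' {z : ℂ} (h : 0 < z.im) : 0 < z.arg := by
  rcases lt_or_eq_of_le (Complex.arg_nonneg_iff.2 h.le) with h' | h'
  · exact h'
  · exact absurd (Complex.arg_eq_zero_iff.1 h'.symm).2 h.ne'

lemma arg_lt_pi_of_im' {z : ℂ} (h : 0 < z.im) : z.arg < Real.pi := by
  rcases lt_or_eq_of_le (Complex.arg_le_pi z) with h' | h'
  · exact h'
  · exact absurd (Complex.arg_eq_pi_iff.1 h').2 h.ne'

lemma arg_mul_of_im' (u v : ℂ) (hu : u ≠ 0) (hv : v ≠ 0)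
    (h : u.im * (u * v).im > 0 ∨ u.im * v.im < 0) :
    (u * v).arg = u.arg + v.arg := by
  have hang := Complex.arg_mul_coe_angle hu hv
  rw [← Real.Angle.coe_add, Real.Angle.angle_eq_iff_two_pi_dvd_sub] at hang
  obtain ⟨k, hk⟩ := hang
  have hπ := Real.pi_pos
  have hbv := Complex.neg_pi_lt_arg v
  have hbv' := Complex.arg_le_pi v
  have hbw := Complex.neg_pi_lt_arg (u * v)
  have hbw' := Complex.arg_le_pi (u * v)
  have hklt : -(2 * Real.pi) < 2 * Real.pi * k ∧ 2 * Real.pi * (k : ℝ) < 2 * Real.pi := by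
    rw [← hk]
    rcases h with h | h
    · rcases mul_pos_iff.1 h with ⟨h1, h2⟩ | ⟨h1, h2⟩
      · have a1 := arg_pos_of_im' h1
        have a2 := arg_lt_pi_of_im' h1
        have a3 := arg_pos_of_im' h2
        have a4 := arg_lt_pi_of_im' h2
        constructor <;> nlinarith
      · have a1 := Complex.arg_neg_iff.2 h1
        have a3 := Complex.arg_neg_iff.2 h2
        have a5 := Complex.neg_pi_lt_arg u
        constructor <;> nlinarith
    · rcases mul_neg_iff.1 h with ⟨h1, h2⟩ | ⟨h1, h2⟩
      · have a1 := arg_pos_of_im' h1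
        have a2 := arg_lt_pi_of_im' h1
        have a3 := Complex.arg_neg_iff.2 h2
        constructor <;> nlinarith
      · have a1 := Complex.arg_neg_iff.2 h1
        have a2 := arg_pos_of_im' h2
        have a4 := arg_lt_pi_of_im' h2
        have a5 := Complex.neg_pi_lt_arg u
        constructor <;> nlinarith
  have hk0 : k = 0 := by
    have h1 : (-1 : ℝ) < (k : ℝ) := by nlinarith [hklt.1]
    have h2 : ((k : ℝ)) < 1 := by nlinarith [hklt.2]
    have h1' : (-1 : ℤ) < k := by exact_mod_cast h1
    have h2' : k < (1 : ℤ) := by exact_mod_cast h2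
    omega
  rw [hk0] at hk
  push_cast at hk
  linarith

/-- if m₁·c·m₁' ≠ 0 and (m₁·m₁' > 0 or m₁·c < 0) then w(M,S) = 0. -/
theorem stmt2 (M S : Matrix (Fin 2) (Fin 2) ℝ) (hM : M.det = 1) (hS : S.det = 1)
    (m₁ m₂ a b c d m₁' : ℝ)
    (hm₁ : m₁ = M 1 0) (hm₂ : m₂ = M 1 1)
    (ha : a = S 0 0) (hb : b = S 0 1) (hc : c = S 1 0) (hd : d = S 1 1)
    (hm₁' : m₁' = m₁ * a + m₂ * c)
    (hne : m₁ * c * m₁' ≠ 0) (hsgn : m₁ * m₁' > 0 ∨ m₁ * c < 0) :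
    w2 M S = 0 := by
  rw [Matrix.det_fin_two] at hS
  subst hm₁ hm₂ ha hb hc hd hm₁'
  have hm0 : M 1 0 ≠ 0 := fun h => hne (by rw [h]; ring)
  have hc0 : S 1 0 ≠ 0 := fun h => hne (by rw [h]; ring)
  set v := j2 S Complex.I with hv
  set u := j2 M (act2 S Complex.I) with hu
  have hvim : v.im = S 1 0 := by simp [hv, j2]
  have hv0 : v ≠ 0 := fun h => hc0 (by rw [h] at hvim; simpa using hvim.symm)
  have huv : u * v = j2 (M * S) Complex.I := by
    rw [hu, hv]
    simp only [j2, act2, Matrix.mul_apply, Fin.sum_univ_two]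
    have hne' : ((S 1 0 : ℝ) : ℂ) * Complex.I + ((S 1 1 : ℝ) : ℂ) ≠ 0 := hv0
    have hne'' : Complex.I * ((S 1 0 : ℝ) : ℂ) + ((S 1 1 : ℝ) : ℂ) ≠ 0 := by rwa [mul_comm] at hne'
    field_simp
    push_cast
    ring
  have hN : 0 < S 1 0 ^ 2 + S 1 1 ^ 2 := by positivity
  have huim : u.im * (S 1 0 ^ 2 + S 1 1 ^ 2) = M 1 0 := by
    rw [hu]
    simp only [j2, act2]
    simp [Complex.div_im, Complex.normSq_apply]
    rw [div_sub_div_same]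
    have hN' : S 1 1 * S 1 1 + S 1 0 * S 1 0 ≠ 0 := by nlinarith
    field_simp
    linear_combination (S 1 0 ^ 2 + S 1 1 ^ 2) * hS
  have huim' : u.im = M 1 0 / (S 1 0 ^ 2 + S 1 1 ^ 2) := by
    rw [eq_div_iff hN.ne']; exact huim
  have huvim : (u * v).im = M 1 0 * S 0 0 + M 1 1 * S 1 0 := by
    rw [huv]; simp [j2, Matrix.mul_apply, Fin.sum_univ_two]
  have hu0 : u ≠ 0 := by
    intro h
    rw [h] at huim
    simp at huim
    exact hm0 huim.symm
  have harg : (u * v).arg = u.arg + v.arg := by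
    apply arg_mul_of_im' u v hu0 hv0
    rcases hsgn with h | h
    · left
      rw [huim', huvim, div_mul_eq_mul_div]
      exact div_pos h hN
    · right
      rw [huim', hvim, div_mul_eq_mul_div]
      exact div_neg_of_neg_of_pos h hN
  unfold w2
  rw [← huv, harg]
  ring
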